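/- arXiv:1306.3776 — 8 statements merged into one kernel-verified Lean document; each statement's English description precedes it below -/
import Mathlib

section
/- Let α, β : ℕ → ℝ with α 0 = 1, αₙ² + βₙ² = 1 for all n, and let a, b be the diagonal operators on ℓ²(ℕ) with a eₙ = αₙ eₙ, b eₙ = βₙ eₙ, and let s be the unilateral right shift. Then the operator u on ℓ²(ℕ) ⊗ ℂ² given in block form by u = [[s* a s, i s* b],[i b s, a]] is unitary. -/
noncomputable section
set_option maxHeartbeats 1000000
open ContinuousLinearMap

/-- ℓ²(ℕ) over ℂ. -/
abbrev H : Type := lp (fun _ : ℕ => ℂ) 2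

/-- The canonical orthonormal basis vectors of ℓ²(ℕ). -/
def e (n : ℕ) : H := lp.single 2 n 1

lemma e_coord (v : H) (n : ℕ) : (inner ℂ (e n) v : ℂ) = (v : ∀ _ : ℕ, ℂ) n := by
  simp [e, lp.inner_single_left, RCLike.inner_apply]

lemma vec_ext {v w : H} (h : ∀ n, (inner ℂ (e n) v : ℂ) = inner ℂ (e n) w) : v = w := by
  apply lp.ext; funext n; simpa [e_coord] using h n

lemma einner (i j : ℕ) : (inner ℂ (e i) (e j) : ℂ) = if i = j then 1 else 0 := by
  simp [e, lp.inner_single_left, lp.single_apply, RCLike.inner_apply, eq_comm, Pi.single_apply]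

lemma dense_span_e : Dense (Submodule.span ℂ (Set.range e) : Set H) := by
  intro f
  refine mem_closure_of_tendsto ((lp.hasSum_single (by norm_num) f)) ?_
  filter_upwards with S
  refine Submodule.sum_mem _ fun i _ => ?_
  have : lp.single 2 i ((f : ∀ _ : ℕ, ℂ) i) = ((f : ∀ _ : ℕ, ℂ) i) • e i := by
    apply lp.ext; funext j; by_cases hji : j = i <;> simp [e, lp.single_apply, hji]
  rw [this]
  exact Submodule.smul_mem _ _ (Submodule.subset_span ⟨i, rfl⟩)

lemma op_ext {f g : H →L[ℂ] H} (h : ∀ n, f (e n) = g (e n)) : f = g := by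
  refine ContinuousLinearMap.ext_on dense_span_e ?_
  rintro x ⟨n, rfl⟩; exact h n

/-- the block operator u = [[s* a s, i s* b],[i b s, a]] on ℓ²(ℕ) ⊗ ℂ²
(written as a 2×2 matrix of bounded operators on ℓ²(ℕ)) is unitary. -/
theorem block_operator_unitary (α β : ℕ → ℝ) (hα0 : α 0 = 1)
    (hαβ : ∀ n, α n ^ 2 + β n ^ 2 = 1)
    (s a b : H →L[ℂ] H)
    (hs : ∀ n, s (e n) = e (n + 1))
    (ha : ∀ n, a (e n) = (α n : ℂ) • e n)
    (hb : ∀ n, b (e n) = (β n : ℂ) • e n)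
    (u : Matrix (Fin 2) (Fin 2) (H →L[ℂ] H))
    (hu : u = !![adjoint s ∘L a ∘L s, Complex.I • (adjoint s ∘L b);
                 Complex.I • (b ∘L s), a]) :
    u * u.conjTranspose = 1 ∧ u.conjTranspose * u = 1 := by
  have hs0 : adjoint s (e 0) = 0 := by
    apply vec_ext; intro m
    rw [adjoint_inner_right, hs m, einner]
    simp
  have hs' : ∀ n, adjoint s (e (n + 1)) = e n := by
    intro n; apply vec_ext; intro m
    rw [adjoint_inner_right, hs m, einner, einner]
    simp
  have haa : adjoint a = a := by
    apply op_ext; intro n; apply vec_ext; intro m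
    rw [adjoint_inner_right, ha m, ha n, inner_smul_left, inner_smul_right, einner]
    by_cases h : m = n <;> simp [h, einner, Complex.conj_ofReal]
  have hbb : adjoint b = b := by
    apply op_ext; intro n; apply vec_ext; intro m
    rw [adjoint_inner_right, hb m, hb n, inner_smul_left, inner_smul_right, einner]
    by_cases h : m = n <;> simp [h, einner, Complex.conj_ofReal]
  have hcoefR : ∀ n, (α n * α n + β n * β n : ℝ) = 1 := by
    intro n; have := hαβ n; nlinarith
  have hcoefR' : ∀ n, (β n * β n + α n * α n : ℝ) = 1 := by
    intro n; have := hαβ n; nlinarith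
  have h11 : (adjoint s ∘L a ∘L s) * star (adjoint s ∘L a ∘L s) + (Complex.I • (adjoint s ∘L b)) * star (Complex.I • (adjoint s ∘L b)) = 1 := by
    apply op_ext; intro n
    rcases n with _ | n
    · simp [star_smul, star_eq_adjoint, Complex.star_def, adjoint_comp, adjoint_adjoint, haa, hbb, mul_apply, comp_apply,
        ContinuousLinearMap.add_apply, ContinuousLinearMap.smul_apply, one_apply, zero_apply,
        hs, ha, hb, hs0, hs', map_smul, smul_smul, hα0, Complex.conj_I, ← add_smul, hcoefR, hcoefR']
      try module
    · simp [star_smul, star_eq_adjoint, Complex.star_def, adjoint_comp, adjoint_adjoint, haa, hbb, mul_apply, comp_apply,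
        ContinuousLinearMap.add_apply, ContinuousLinearMap.smul_apply, one_apply, zero_apply,
        hs, ha, hb, hs0, hs', map_smul, smul_smul, hα0, Complex.conj_I, ← add_smul, hcoefR, hcoefR']
      try module
  have h12 : (adjoint s ∘L a ∘L s) * star (Complex.I • (b ∘L s)) + (Complex.I • (adjoint s ∘L b)) * star a = 0 := by
    apply op_ext; intro n
    rcases n with _ | n
    · simp [star_smul, star_eq_adjoint, Complex.star_def, adjoint_comp, adjoint_adjoint, haa, hbb, mul_apply, comp_apply,
        ContinuousLinearMap.add_apply, ContinuousLinearMap.smul_apply, one_apply, zero_apply,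
        hs, ha, hb, hs0, hs', map_smul, smul_smul, hα0, Complex.conj_I, ← add_smul, hcoefR, hcoefR']
      try module
    · simp [star_smul, star_eq_adjoint, Complex.star_def, adjoint_comp, adjoint_adjoint, haa, hbb, mul_apply, comp_apply,
        ContinuousLinearMap.add_apply, ContinuousLinearMap.smul_apply, one_apply, zero_apply,
        hs, ha, hb, hs0, hs', map_smul, smul_smul, hα0, Complex.conj_I, ← add_smul, hcoefR, hcoefR']
      try module
  have h21 : (Complex.I • (b ∘L s)) * star (adjoint s ∘L a ∘L s) + a * star (Complex.I • (adjoint s ∘L b)) = 0 := by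
    apply op_ext; intro n
    rcases n with _ | n
    · simp [star_smul, star_eq_adjoint, Complex.star_def, adjoint_comp, adjoint_adjoint, haa, hbb, mul_apply, comp_apply,
        ContinuousLinearMap.add_apply, ContinuousLinearMap.smul_apply, one_apply, zero_apply,
        hs, ha, hb, hs0, hs', map_smul, smul_smul, hα0, Complex.conj_I, ← add_smul, hcoefR, hcoefR']
      try module
    · simp [star_smul, star_eq_adjoint, Complex.star_def, adjoint_comp, adjoint_adjoint, haa, hbb, mul_apply, comp_apply,
        ContinuousLinearMap.add_apply, ContinuousLinearMap.smul_apply, one_apply, zero_apply,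
        hs, ha, hb, hs0, hs', map_smul, smul_smul, hα0, Complex.conj_I, ← add_smul, hcoefR, hcoefR']
      try module
  have h22 : (Complex.I • (b ∘L s)) * star (Complex.I • (b ∘L s)) + a * star a = 1 := by
    apply op_ext; intro n
    rcases n with _ | n
    · simp [star_smul, star_eq_adjoint, Complex.star_def, adjoint_comp, adjoint_adjoint, haa, hbb, mul_apply, comp_apply,
        ContinuousLinearMap.add_apply, ContinuousLinearMap.smul_apply, one_apply, zero_apply,
        hs, ha, hb, hs0, hs', map_smul, smul_smul, hα0, Complex.conj_I, ← add_smul, hcoefR, hcoefR']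
      try module
    · simp [star_smul, star_eq_adjoint, Complex.star_def, adjoint_comp, adjoint_adjoint, haa, hbb, mul_apply, comp_apply,
        ContinuousLinearMap.add_apply, ContinuousLinearMap.smul_apply, one_apply, zero_apply,
        hs, ha, hb, hs0, hs', map_smul, smul_smul, hα0, Complex.conj_I, ← add_smul, hcoefR, hcoefR']
      try module
      simp only [← Complex.coe_smul]; simp only [show ∀ (r : ℝ) (v : H), r • v = (r : ℂ) • v from fun r v => rfl]; rw [smul_smul, smul_smul, ← add_smul, ← Complex.ofReal_mul, ← Complex.ofReal_mul, ← Complex.ofReal_add, hcoefR', Complex.ofReal_one, one_smul]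
  have k11 : star (adjoint s ∘L a ∘L s) * (adjoint s ∘L a ∘L s) + star (Complex.I • (b ∘L s)) * (Complex.I • (b ∘L s)) = 1 := by
    apply op_ext; intro n
    rcases n with _ | n
    · simp [star_smul, star_eq_adjoint, Complex.star_def, adjoint_comp, adjoint_adjoint, haa, hbb, mul_apply, comp_apply,
        ContinuousLinearMap.add_apply, ContinuousLinearMap.smul_apply, one_apply, zero_apply,
        hs, ha, hb, hs0, hs', map_smul, smul_smul, hα0, Complex.conj_I, ← add_smul, hcoefR, hcoefR']
      try module
    · simp [star_smul, star_eq_adjoint, Complex.star_def, adjoint_comp, adjoint_adjoint, haa, hbb, mul_apply, comp_apply,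
        ContinuousLinearMap.add_apply, ContinuousLinearMap.smul_apply, one_apply, zero_apply,
        hs, ha, hb, hs0, hs', map_smul, smul_smul, hα0, Complex.conj_I, ← add_smul, hcoefR, hcoefR']
      try module
  have k12 : star (adjoint s ∘L a ∘L s) * (Complex.I • (adjoint s ∘L b)) + star (Complex.I • (b ∘L s)) * a = 0 := by
    apply op_ext; intro n
    rcases n with _ | n
    · simp [star_smul, star_eq_adjoint, Complex.star_def, adjoint_comp, adjoint_adjoint, haa, hbb, mul_apply, comp_apply,
        ContinuousLinearMap.add_apply, ContinuousLinearMap.smul_apply, one_apply, zero_apply,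
        hs, ha, hb, hs0, hs', map_smul, smul_smul, hα0, Complex.conj_I, ← add_smul, hcoefR, hcoefR']
      try module
    · simp [star_smul, star_eq_adjoint, Complex.star_def, adjoint_comp, adjoint_adjoint, haa, hbb, mul_apply, comp_apply,
        ContinuousLinearMap.add_apply, ContinuousLinearMap.smul_apply, one_apply, zero_apply,
        hs, ha, hb, hs0, hs', map_smul, smul_smul, hα0, Complex.conj_I, ← add_smul, hcoefR, hcoefR']
      try module
  have k21 : star (Complex.I • (adjoint s ∘L b)) * (adjoint s ∘L a ∘L s) + star a * (Complex.I • (b ∘L s)) = 0 := by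
    apply op_ext; intro n
    rcases n with _ | n
    · simp [star_smul, star_eq_adjoint, Complex.star_def, adjoint_comp, adjoint_adjoint, haa, hbb, mul_apply, comp_apply,
        ContinuousLinearMap.add_apply, ContinuousLinearMap.smul_apply, one_apply, zero_apply,
        hs, ha, hb, hs0, hs', map_smul, smul_smul, hα0, Complex.conj_I, ← add_smul, hcoefR, hcoefR']
      try module
    · simp [star_smul, star_eq_adjoint, Complex.star_def, adjoint_comp, adjoint_adjoint, haa, hbb, mul_apply, comp_apply,
        ContinuousLinearMap.add_apply, ContinuousLinearMap.smul_apply, one_apply, zero_apply,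
        hs, ha, hb, hs0, hs', map_smul, smul_smul, hα0, Complex.conj_I, ← add_smul, hcoefR, hcoefR']
      try module
  have k22 : star (Complex.I • (adjoint s ∘L b)) * (Complex.I • (adjoint s ∘L b)) + star a * a = 1 := by
    apply op_ext; intro n
    rcases n with _ | n
    · simp [star_smul, star_eq_adjoint, Complex.star_def, adjoint_comp, adjoint_adjoint, haa, hbb, mul_apply, comp_apply,
        ContinuousLinearMap.add_apply, ContinuousLinearMap.smul_apply, one_apply, zero_apply,
        hs, ha, hb, hs0, hs', map_smul, smul_smul, hα0, Complex.conj_I, ← add_smul, hcoefR, hcoefR']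
      try module
    · simp [star_smul, star_eq_adjoint, Complex.star_def, adjoint_comp, adjoint_adjoint, haa, hbb, mul_apply, comp_apply,
        ContinuousLinearMap.add_apply, ContinuousLinearMap.smul_apply, one_apply, zero_apply,
        hs, ha, hb, hs0, hs', map_smul, smul_smul, hα0, Complex.conj_I, ← add_smul, hcoefR, hcoefR']
      try module
      simp only [← Complex.coe_smul]; simp only [show ∀ (r : ℝ) (v : H), r • v = (r : ℂ) • v from fun r v => rfl]; rw [smul_smul, smul_smul, ← add_smul, ← Complex.ofReal_mul, ← Complex.ofReal_mul, ← Complex.ofReal_add, hcoefR', Complex.ofReal_one, one_smul]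
  have hCT : (!![adjoint s ∘L a ∘L s, Complex.I • (adjoint s ∘L b);
      Complex.I • (b ∘L s), a]).conjTranspose
      = !![star (adjoint s ∘L a ∘L s), star (Complex.I • (b ∘L s)); star (Complex.I • (adjoint s ∘L b)), star a] := by
    ext i j
    fin_cases i <;> fin_cases j <;> simp [Matrix.conjTranspose_apply]
  subst hu
  rw [hCT, Matrix.mul_fin_two, Matrix.mul_fin_two, Matrix.one_fin_two]
  exact ⟨by rw [h11, h12, h21, h22], by rw [k11, k12, k21, k22]⟩
end
end

section
/- With notation as in the construction (shift s, diagonal operators a, b with a²+b²=1, α₀=1, β₀=0), for a state ψ on M₂ with density matrix ρ = [[λ, ζ̄√(λ(1−λ))],[ζ√(λ(1−λ)),1−λ]], 0<λ≤1, the transition operator T_ψ(x) := P_ψ(u*(x⊗1)u) satisfies, for every bounded operator x on ℓ²(ℕ), T_ψ(x) = λ(t₁* x t₁ + t₂* x t₂) + (1−λ)(1−|ζ|²)(t₃* x t₃ + t₄* x t₄), where t₁ = s* a s + iζ√((1−λ)/λ) s* b, t₂ = b s − iζ√((1−λ)/λ) a, t₃ = s* b, t₄ = a. -/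
noncomputable section
open ContinuousLinearMap

/-- The slice map applied to u*(x⊗1)u: for a block matrix M = Σ xᵢⱼ ⊗ Eᵢⱼ and a state ψ
with density matrix ρ (so ψ(Eᵢⱼ) = ρ j i), P_ψ(M) = Σᵢⱼ ρ j i • Mᵢⱼ.  This defines
the transition operator T_ψ(x) = P_ψ(u*(x⊗1)u). -/
def transOp (u : Matrix (Fin 2) (Fin 2) (H →L[ℂ] H)) (ρ : Matrix (Fin 2) (Fin 2) ℂ)
    (x : H →L[ℂ] H) : H →L[ℂ] H :=
  ∑ i : Fin 2, ∑ j : Fin 2, ρ j i • ((u.conjTranspose * !![x, 0; 0, x] * u) i j)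

lemma aux (A B C D x : H →L[ℂ] H) (L r R nz ζ : ℂ)
    (hR : (starRingEnd ℂ) R = R) (h1 : L * R = r) (h2 : L * R ^ 2 = 1 - L) (hz : (starRingEnd ℂ) ζ * ζ = nz) :
    (∑ i : Fin 2, ∑ j : Fin 2,
      (!![L, (starRingEnd ℂ) ζ * r; ζ * r, 1 - L] : Matrix (Fin 2) (Fin 2) ℂ) j i •
      ((!![A, Complex.I • B; Complex.I • C, D].conjTranspose * !![x, 0; 0, x] *
        !![A, Complex.I • B; Complex.I • C, D]) i j))
    = L • (adjoint (A + (Complex.I * ζ * R) • B) ∘L x ∘L (A + (Complex.I * ζ * R) • B)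
        + adjoint (C - (Complex.I * ζ * R) • D) ∘L x ∘L (C - (Complex.I * ζ * R) • D))
      + ((1 - L) * (1 - nz)) • (adjoint B ∘L x ∘L B + adjoint D ∘L x ∘L D) := by
  simp only [Matrix.mul_apply, Fin.sum_univ_two, Matrix.conjTranspose_apply,
    Matrix.of_apply, Matrix.cons_val', Matrix.cons_val_zero, Matrix.cons_val_one, Matrix.head_cons,
    Matrix.empty_val', Matrix.cons_val_fin_one, Matrix.head_fin_const,
    ← star_eq_adjoint, star_add, star_sub, star_smul, mul_def,
    comp_add, add_comp, comp_sub, sub_comp, smul_comp, comp_smul,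
    mul_add, add_mul, sub_mul, mul_sub, zero_mul, mul_zero, add_zero, zero_add,
    comp_zero, zero_comp, smul_smul, mul_smul_comm, smul_mul_assoc, mul_assoc, comp_assoc,
    Complex.I_mul_I]
  match_scalars
  all_goals simp only [Complex.star_def, map_mul, Complex.conj_I, hR, mul_one, one_mul, Complex.I_sq]
  all_goals first
    | ring1
    | linear_combination (starRingEnd ℂ) ζ * Complex.I * h1
    | linear_combination -((starRingEnd ℂ) ζ * Complex.I) * h1
    | linear_combination ζ * Complex.I * h1
    | linear_combination -(ζ * Complex.I) * h1
    | linear_combination -L * Complex.I_sq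
    | linear_combination -(ζ * (starRingEnd ℂ) ζ) * h2 - (1 - L) * hz
        + L * ζ * R ^ 2 * (starRingEnd ℂ) ζ * Complex.I_sq
    | linear_combination (L - 1) * Complex.I_sq - (ζ * (starRingEnd ℂ) ζ) * h2 - (1 - L) * hz
        + L * ζ * R ^ 2 * (starRingEnd ℂ) ζ * Complex.I_sq

/-- Kraus decomposition of the transition operator T_ψ. -/
theorem kraus_decomposition (α β : ℕ → ℝ) (hα0 : α 0 = 1) (hβ0 : β 0 = 0)
    (hαβ : ∀ n, α n ^ 2 + β n ^ 2 = 1) (hβ : ∀ n, 1 ≤ n → β n ≠ 0)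
    (s a b : H →L[ℂ] H)
    (hs : ∀ n, s (e n) = e (n + 1))
    (ha : ∀ n, a (e n) = (α n : ℂ) • e n)
    (hb : ∀ n, b (e n) = (β n : ℂ) • e n)
    (l : ℝ) (hl0 : 0 < l) (hl1 : l ≤ 1) (ζ : ℂ) (hζ : ‖ζ‖ ≤ 1)
    (u : Matrix (Fin 2) (Fin 2) (H →L[ℂ] H))
    (hu : u = !![adjoint s ∘L a ∘L s, Complex.I • (adjoint s ∘L b);
                 Complex.I • (b ∘L s), a])
    (ρ : Matrix (Fin 2) (Fin 2) ℂ)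
    (hρ : ρ = !![(l : ℂ), (starRingEnd ℂ) ζ * ((Real.sqrt (l * (1 - l)) : ℝ) : ℂ);
                 ζ * ((Real.sqrt (l * (1 - l)) : ℝ) : ℂ), ((1 - l : ℝ) : ℂ)])
    (t₁ t₂ t₃ t₄ : H →L[ℂ] H)
    (ht₁ : t₁ = adjoint s ∘L a ∘L s
        + (Complex.I * ζ * ((Real.sqrt ((1 - l) / l) : ℝ) : ℂ)) • (adjoint s ∘L b))
    (ht₂ : t₂ = b ∘L s - (Complex.I * ζ * ((Real.sqrt ((1 - l) / l) : ℝ) : ℂ)) • a)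
    (ht₃ : t₃ = adjoint s ∘L b)
    (ht₄ : t₄ = a) :
    ∀ x : H →L[ℂ] H,
      transOp u ρ x
        = (l : ℂ) • (adjoint t₁ ∘L x ∘L t₁ + adjoint t₂ ∘L x ∘L t₂)
          + (((1 - l) * (1 - ‖ζ‖ ^ 2) : ℝ) : ℂ) •
              (adjoint t₃ ∘L x ∘L t₃ + adjoint t₄ ∘L x ∘L t₄) := by
  intro x
  subst hu hρ ht₁ ht₂ ht₃ ht₄
  have e1 : ((1 - l : ℝ) : ℂ) = 1 - (l : ℂ) := by push_cast; ring
  have e2 : (((1 - l) * (1 - ‖ζ‖ ^ 2) : ℝ) : ℂ)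
      = (1 - (l : ℂ)) * (1 - ((‖ζ‖ ^ 2 : ℝ) : ℂ)) := by push_cast; ring
  have hR : (starRingEnd ℂ) ((Real.sqrt ((1 - l) / l) : ℝ) : ℂ)
      = ((Real.sqrt ((1 - l) / l) : ℝ) : ℂ) := Complex.conj_ofReal _
  have h1 : (l : ℂ) * ((Real.sqrt ((1 - l) / l) : ℝ) : ℂ)
      = ((Real.sqrt (l * (1 - l)) : ℝ) : ℂ) := by
    rw [← Complex.ofReal_mul]
    congr 1
    rw [show l * (1 - l) = l ^ 2 * ((1 - l) / l) by field_simp,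
      Real.sqrt_mul (by positivity) ((1 - l) / l), Real.sqrt_sq hl0.le]
  have h2 : (l : ℂ) * ((Real.sqrt ((1 - l) / l) : ℝ) : ℂ) ^ 2 = 1 - (l : ℂ) := by
    rw [← Complex.ofReal_pow, Real.sq_sqrt (div_nonneg (by linarith) hl0.le)]
    have hne : (l : ℂ) ≠ 0 := Complex.ofReal_ne_zero.mpr hl0.ne'
    push_cast
    field_simp
  have hz : (starRingEnd ℂ) ζ * ζ = ((‖ζ‖ ^ 2 : ℝ) : ℂ) := by
    rw [mul_comm, Complex.mul_conj']
    push_cast; ring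
  unfold transOp
  rw [e1, e2]
  exact aux _ _ _ _ x _ _ _ _ ζ hR h1 h2 hz
end
end

section
/- Let T : B(H) → B(H) be given by T(x) = Σ_{i∈I} aᵢ* x aᵢ with Σ aᵢ* aᵢ = 1 (finite index set I). A projection p ∈ B(H) satisfies T(p) ≥ p if and only if aᵢ p = p aᵢ p for every i ∈ I. -/
noncomputable section
open ContinuousLinearMap
open scoped InnerProductSpace

section aux
variable {H : Type*} [NormedAddCommGroup H] [InnerProductSpace ℂ H] [CompleteSpace H]

private lemma proj_inner_self (p : H →L[ℂ] H) (hsa : IsSelfAdjoint p) (hidem : p ∘L p = p)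
    (z : H) : ⟪p z, z⟫_ℂ = ⟪p z, p z⟫_ℂ := by
  have hadj : adjoint p = p := hsa
  conv_lhs => rw [← hadj, adjoint_inner_left]
  conv_rhs => rw [← hadj, adjoint_inner_left, hadj, ← comp_apply, hidem]

private lemma proj_re (p : H →L[ℂ] H) (hsa : IsSelfAdjoint p) (hidem : p ∘L p = p)
    (z : H) : Complex.re ⟪p z, z⟫_ℂ = ‖p z‖ ^ 2 := by
  rw [proj_inner_self p hsa hidem, inner_self_eq_norm_sq_to_K]
  simp [← Complex.ofReal_pow]

private lemma proj_pyth (p : H →L[ℂ] H) (hsa : IsSelfAdjoint p) (hidem : p ∘L p = p)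
    (z : H) : ‖z‖ ^ 2 = ‖p z‖ ^ 2 + ‖z - p z‖ ^ 2 := by
  have horth : ⟪p z, z - p z⟫_ℂ = 0 := by
    rw [inner_sub_right, proj_inner_self p hsa hidem, sub_self]
  have h : z = p z + (z - p z) := by abel
  calc ‖z‖ ^ 2 = ‖p z + (z - p z)‖ ^ 2 := by rw [← h]
    _ = ‖p z‖ ^ 2 + 2 * Complex.re ⟪p z, z - p z⟫_ℂ + ‖z - p z‖ ^ 2 :=
        norm_add_sq (𝕜 := ℂ) _ _
    _ = ‖p z‖ ^ 2 + ‖z - p z‖ ^ 2 := by rw [horth]; simp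

private lemma unital_inner {I : Type*} [Fintype I] (a : I → (H →L[ℂ] H))
    (hunital : ∑ i, adjoint (a i) ∘L a i = 1) (u v : H) :
    ∑ i, ⟪a i u, a i v⟫_ℂ = ⟪u, v⟫_ℂ := by
  have : ∀ i, ⟪a i u, a i v⟫_ℂ = ⟪u, (adjoint (a i) ∘L a i) v⟫_ℂ := by
    intro i
    rw [comp_apply, ← adjoint_inner_right]
  simp_rw [this, ← inner_sum, ← ContinuousLinearMap.sum_apply, hunital, ContinuousLinearMap.one_apply]

private lemma unital_norm {I : Type*} [Fintype I] (a : I → (H →L[ℂ] H))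
    (hunital : ∑ i, adjoint (a i) ∘L a i = 1) (u : H) :
    ∑ i, ‖a i u‖ ^ 2 = ‖u‖ ^ 2 := by
  have := unital_inner a hunital u u
  have h2 := congrArg Complex.re this
  simpa [inner_self_eq_norm_sq_to_K, ← Complex.ofReal_pow] using h2

private lemma key_re {I : Type*} [Fintype I] (a : I → (H →L[ℂ] H))
    (p : H →L[ℂ] H) (hsa : IsSelfAdjoint p) (hidem : p ∘L p = p) (x : H) :
    Complex.re ⟪((∑ i, adjoint (a i) ∘L p ∘L a i) - p) x, x⟫_ℂ
      = (∑ i, ‖p (a i x)‖ ^ 2) - ‖p x‖ ^ 2 := by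
  have h1 : ⟪((∑ i, adjoint (a i) ∘L p ∘L a i) - p) x, x⟫_ℂ
      = (∑ i, ⟪p (a i x), a i x⟫_ℂ) - ⟪p x, x⟫_ℂ := by
    rw [sub_apply, inner_sub_left, ContinuousLinearMap.sum_apply, sum_inner]
    congr 1
    refine Finset.sum_congr rfl fun i _ => ?_
    rw [comp_apply, comp_apply, adjoint_inner_left]
  rw [h1]
  simp only [Complex.sub_re, Complex.re_sum]
  rw [proj_re p hsa hidem]
  congr 1
  exact Finset.sum_congr rfl fun i _ => proj_re p hsa hidem (a i x)

end aux

/-- for T(x) = Σᵢ aᵢ* x aᵢ with Σᵢ aᵢ* aᵢ = 1 (finite I), a projection p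
satisfies T(p) ≥ p if and only if aᵢ p = p aᵢ p for every i. -/
theorem subharmonic_iff {H : Type*} [NormedAddCommGroup H] [InnerProductSpace ℂ H]
    [CompleteSpace H] {I : Type*} [Fintype I] (a : I → (H →L[ℂ] H))
    (hunital : ∑ i, adjoint (a i) ∘L a i = 1)
    (p : H →L[ℂ] H) (hsa : IsSelfAdjoint p) (hidem : p ∘L p = p) :
    ((∑ i, adjoint (a i) ∘L p ∘L a i) - p).IsPositive
      ↔ ∀ i, a i ∘L p = p ∘L (a i ∘L p) := by
  constructor
  · intro hpos i
    ext y
    set x := p y with hxdef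
    have hx : p x = x := by rw [hxdef, ← comp_apply, hidem]
    have h0 : 0 ≤ Complex.re ⟪((∑ i, adjoint (a i) ∘L p ∘L a i) - p) x, x⟫_ℂ := hpos.2 x
    rw [key_re a p hsa hidem x, hx] at h0
    have hsum : ∑ j, ‖a j x - p (a j x)‖ ^ 2 ≤ 0 := by
      have hnx : ‖x‖ ^ 2 = ∑ j, ‖a j x‖ ^ 2 := (unital_norm a hunital x).symm
      have hterm : ∀ j, ‖a j x - p (a j x)‖ ^ 2 = ‖a j x‖ ^ 2 - ‖p (a j x)‖ ^ 2 := by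
        intro j
        have := proj_pyth p hsa hidem (a j x)
        linarith
      calc ∑ j, ‖a j x - p (a j x)‖ ^ 2
          = ∑ j, (‖a j x‖ ^ 2 - ‖p (a j x)‖ ^ 2) := Finset.sum_congr rfl fun j _ => hterm j
        _ = (∑ j, ‖a j x‖ ^ 2) - ∑ j, ‖p (a j x)‖ ^ 2 := Finset.sum_sub_distrib _ _
        _ ≤ 0 := by linarith
    have hzero : ‖a i x - p (a i x)‖ ^ 2 = 0 := by
      have hnn : ∀ j ∈ Finset.univ, (0:ℝ) ≤ ‖a j x - p (a j x)‖ ^ 2 :=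
        fun j _ => sq_nonneg _
      have := (Finset.sum_eq_zero_iff_of_nonneg hnn).1
        (le_antisymm hsum (Finset.sum_nonneg hnn))
      exact this i (Finset.mem_univ i)
    have : a i x - p (a i x) = 0 := by
      have := pow_eq_zero_iff (n := 2) (by norm_num) |>.1 hzero
      exact norm_eq_zero.1 this
    simp only [comp_apply]
    rw [← hxdef]
    exact sub_eq_zero.1 this
  · intro hc
    have hc' : ∀ i z, a i (p z) = p (a i (p z)) := by
      intro i z
      have := congrArg (fun T => T z) (hc i)
      simpa using this
    constructor
    · have hadj : adjoint p = p := hsa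
      refine IsSelfAdjoint.isSymmetric ?_
      rw [IsSelfAdjoint, star_sub, star_sum]
      simp [star_eq_adjoint, adjoint_comp, adjoint_adjoint, hadj, comp_assoc]
    · intro x
      have goal_eq : ((∑ i, adjoint (a i) ∘L p ∘L a i) - p).reApplyInnerSelf x
          = (∑ i, ‖p (a i x)‖ ^ 2) - ‖p x‖ ^ 2 := key_re a p hsa hidem x
      rw [goal_eq]
      set v := x - p x with hvdef
      have hpv : p v = 0 := by
        rw [hvdef, map_sub, ← comp_apply, hidem, sub_self]
      have hsplit : ∀ i, p (a i x) = a i (p x) + p (a i v) := by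
        intro i
        have hx : x = p x + v := by rw [hvdef]; abel
        calc p (a i x) = p (a i (p x + v)) := by rw [← hx]
          _ = p (a i (p x)) + p (a i v) := by rw [map_add, map_add]
          _ = a i (p x) + p (a i v) := by rw [← hc' i x]
      have hcross : ∀ i, ⟪a i (p x), p (a i v)⟫_ℂ = ⟪a i (p x), a i v⟫_ℂ := by
        intro i
        have hadj : adjoint p = p := hsa
        rw [← hadj, adjoint_inner_right, hadj, ← hc' i x]
      have hcross_sum : ∑ i, ⟪a i (p x), a i v⟫_ℂ = 0 := by
        rw [unital_inner a hunital (p x) v, hvdef, inner_sub_right,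
          proj_inner_self p hsa hidem, sub_self]
      have hnorm : ∀ i, ‖p (a i x)‖ ^ 2
          = ‖a i (p x)‖ ^ 2 + 2 * Complex.re ⟪a i (p x), p (a i v)⟫_ℂ + ‖p (a i v)‖ ^ 2 := by
        intro i
        rw [hsplit i]
        exact norm_add_sq (𝕜 := ℂ) _ _
      have hsum1 : ∑ i, ‖p (a i x)‖ ^ 2
          = ‖p x‖ ^ 2 + ∑ i, ‖p (a i v)‖ ^ 2 := by
        calc ∑ i, ‖p (a i x)‖ ^ 2
            = ∑ i, (‖a i (p x)‖ ^ 2 + 2 * Complex.re ⟪a i (p x), a i v⟫_ℂ + ‖p (a i v)‖ ^ 2) := by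
              refine Finset.sum_congr rfl fun i _ => ?_
              rw [hnorm i, hcross i]
          _ = (∑ i, ‖a i (p x)‖ ^ 2) + 2 * Complex.re (∑ i, ⟪a i (p x), a i v⟫_ℂ)
              + ∑ i, ‖p (a i v)‖ ^ 2 := by
              rw [Finset.sum_add_distrib, Finset.sum_add_distrib, Complex.re_sum,
                Finset.mul_sum]
          _ = ‖p x‖ ^ 2 + ∑ i, ‖p (a i v)‖ ^ 2 := by
              rw [unital_norm a hunital (p x), hcross_sum]
              simp
      rw [hsum1]
      have : (0:ℝ) ≤ ∑ i, ‖p (a i v)‖ ^ 2 := Finset.sum_nonneg fun i _ => sq_nonneg _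
      linarith
end
end

section
/- Let T : B(H) → B(H), T(x) = Σ_{i∈I} aᵢ* x aᵢ with Σ aᵢ* aᵢ = 1 (finite I), and suppose φ is a faithful state on B(H) with φ∘T = φ. Then for μ ∈ ℂ with |μ| = 1 and x ∈ B(H): T(x) = μ x if and only if x aᵢ = μ aᵢ x for all i ∈ I. -/
noncomputable section
open ContinuousLinearMap
open scoped ComplexOrder

/-- if T(x) = Σᵢ aᵢ* x aᵢ is unital (Σ aᵢ* aᵢ = 1) and φ is a faithful
T-invariant state on B(H), then for |μ| = 1:  T(x) = μ x  ↔  x aᵢ = μ aᵢ x for all i. -/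
theorem peripheral_eigenvector_iff {H : Type*} [NormedAddCommGroup H]
    [InnerProductSpace ℂ H] [CompleteSpace H] {I : Type*} [Fintype I]
    (a : I → (H →L[ℂ] H)) (hunital : ∑ i, adjoint (a i) ∘L a i = 1)
    (φ : (H →L[ℂ] H) →ₗ[ℂ] ℂ) (hφ1 : φ 1 = 1)
    (hφpos : ∀ x : H →L[ℂ] H, 0 ≤ φ (adjoint x ∘L x))
    (hφfaithful : ∀ x : H →L[ℂ] H, φ (adjoint x ∘L x) = 0 → x = 0)
    (hφinv : ∀ x : H →L[ℂ] H, φ (∑ i, adjoint (a i) ∘L x ∘L a i) = φ x)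
    (μ : ℂ) (hμ : ‖μ‖ = 1) (x : H →L[ℂ] H) :
    (∑ i, adjoint (a i) ∘L x ∘L a i) = μ • x ↔ ∀ i, x ∘L a i = μ • (a i ∘L x) := by
  simp only [← ContinuousLinearMap.star_eq_adjoint, ← ContinuousLinearMap.mul_def] at *
  have hconj : star μ * μ = 1 := by
    rw [Complex.star_def, mul_comm, Complex.mul_conj, Complex.normSq_eq_norm_sq,
      hμ]
    norm_num
  have hconj' : μ * star μ = 1 := by rw [mul_comm]; exact hconj
  constructor
  · intro hT
    set y : I → (H →L[ℂ] H) := fun i => x * a i - μ • (a i * x) with hy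
    have hTstar : ∑ i, star (a i) * (star x * a i) = star μ • star x := by
      have := congrArg star hT
      simp only [star_sum, star_mul, star_smul, star_star, mul_assoc] at this
      exact this
    have expand : ∀ i : I, star (y i) * y i =
        star (a i) * (star x * x * a i)
        - μ • (star (a i) * (star x * a i) * x)
        - star μ • (star x * (star (a i) * (x * a i)))
        + (μ * star μ) • (star x * (star (a i) * a i * x)) := by
      intro i
      simp only [hy, star_sub, star_mul, star_smul]
      simp only [sub_mul, mul_sub, smul_mul_assoc, mul_smul_comm, smul_smul, smul_sub,
        mul_assoc]
      abel
    have key : ∑ i, star (y i) * y i =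
        (∑ i, star (a i) * (star x * x * a i)) - star x * x := by
      calc ∑ i, star (y i) * y i
          = (∑ i, star (a i) * (star x * x * a i))
            - μ • ((∑ i, star (a i) * (star x * a i)) * x)
            - star μ • (star x * ∑ i, star (a i) * (x * a i))
            + (μ * star μ) • (star x * ((∑ i, star (a i) * a i) * x)) := by
            simp only [expand, Finset.sum_add_distrib, Finset.sum_sub_distrib,
              Finset.smul_sum, Finset.sum_mul, Finset.mul_sum, mul_assoc]
        _ = (∑ i, star (a i) * (star x * x * a i)) - star x * x := by
            rw [hT, hTstar, hunital]
            simp only [smul_mul_assoc, mul_smul_comm, smul_smul, hconj, hconj',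
              one_smul, one_mul]
            abel
    have hφ0 : ∑ i, φ (star (y i) * y i) = 0 := by
      rw [← map_sum, key, map_sub, hφinv (star x * x), sub_self]
    have hterm : ∀ i ∈ Finset.univ, φ (star (y i) * y i) = 0 :=
      (Finset.sum_eq_zero_iff_of_nonneg (fun i _ => hφpos (y i))).mp hφ0
    intro i
    have hyi : y i = 0 := hφfaithful _ (hterm i (Finset.mem_univ i))
    have := sub_eq_zero.mp hyi
    exact this
  · intro h
    calc ∑ i, star (a i) * (x * a i) = μ • ∑ i, star (a i) * (a i * x) := by
          rw [Finset.smul_sum]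
          exact Finset.sum_congr rfl fun i _ => by rw [h i, mul_smul_comm]
      _ = μ • x := by
          simp only [← mul_assoc, ← Finset.sum_mul, hunital, one_mul]
end
end

section
/- Let T : B(H) → B(H), T(x) = Σ_{i∈I} aᵢ* x aᵢ with Σ aᵢ* aᵢ = 1, and suppose the linear span of {aᵢ : i ∈ I} is a self-adjoint subset of B(H). If a projection p satisfies aᵢ p = p aᵢ p for all i, then p commutes with every aᵢ and T(p) = p. -/
noncomputable section
open ContinuousLinearMap

/-- if T(x) = Σᵢ aᵢ* x aᵢ is unital and the linear span of {aᵢ} is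
self-adjoint, then a projection p with aᵢ p = p aᵢ p for all i commutes with every aᵢ
and is a fixed point: T(p) = p. -/
theorem subharmonic_projection_is_fixed {H : Type*} [NormedAddCommGroup H]
    [InnerProductSpace ℂ H] [CompleteSpace H] {I : Type*} [Fintype I]
    (a : I → (H →L[ℂ] H)) (hunital : ∑ i, adjoint (a i) ∘L a i = 1)
    (hselfadj : ∀ i, adjoint (a i) ∈ Submodule.span ℂ (Set.range a))
    (p : H →L[ℂ] H) (hsa : IsSelfAdjoint p) (hidem : p ∘L p = p)
    (hcomm : ∀ i, a i ∘L p = p ∘L (a i ∘L p)) :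
    (∀ i, a i ∘L p = p ∘L a i) ∧ (∑ i, adjoint (a i) ∘L p ∘L a i) = p := by
  have hpadj : adjoint p = p := hsa.adjoint_eq
  have hq : ∀ b ∈ Submodule.span ℂ (Set.range a), (1 - p) ∘L (b ∘L p) = 0 := by
    intro b hb
    induction hb using Submodule.span_induction with
    | mem x hx =>
        obtain ⟨i, rfl⟩ := hx
        rw [sub_comp, one_def, id_comp, ← hcomm i, sub_self]
    | zero => simp
    | add x y _ _ hx hy => rw [add_comp, comp_add, hx, hy, add_zero]
    | smul c x _ hx => rw [smul_comp, comp_smul, hx, smul_zero]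
  have hcomm' : ∀ i, a i ∘L p = p ∘L a i := by
    intro i
    have h1 := hq _ (hselfadj i)
    have h2 : (p ∘L a i) ∘L (1 - p) = 0 := by
      have := congrArg adjoint h1
      simpa [adjoint_comp, hpadj, map_sub, adjoint_adjoint, one_def, adjoint_id] using this
    have h3 : p ∘L a i = (p ∘L a i) ∘L p := by
      rw [comp_sub, one_def, comp_id, sub_eq_zero] at h2
      exact h2
    rw [comp_assoc] at h3
    rw [h3, ← hcomm i]
  refine ⟨hcomm', ?_⟩
  have : ∀ i, adjoint (a i) ∘L p ∘L a i = (adjoint (a i) ∘L a i) ∘L p := by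
    intro i
    rw [← hcomm' i, ← comp_assoc]
  rw [Finset.sum_congr rfl fun i _ => this i]
  rw [← finset_sum_comp, hunital, one_def, id_comp]
end
end

section
/- Let b, s be as above (β₀ = 0, βₙ ≠ 0 for n ≥ 1) and let p be an orthogonal projection on ℓ²(ℕ) commuting with s*b and with bs. Then p commutes with every coordinate projection pₙ = |eₙ⟩⟨eₙ|; i.e., p is a diagonal operator. -/
set_option maxHeartbeats 1000000

noncomputable section
open ContinuousLinearMap

lemma inner_e (n : ℕ) (x : H) : @inner ℂ _ _ (e n) x = x n := by
  rw [e, lp.inner_single_left]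
  simp [RCLike.inner_apply]

lemma e_apply (n m : ℕ) : (e n : ∀ _ : ℕ, ℂ) m = if n = m then 1 else 0 := by
  rw [e, lp.single_apply]
  split_ifs with h h' h' <;> simp_all

lemma H_ext {x y : H} (h : ∀ n, @inner ℂ _ _ (e n) x = @inner ℂ _ _ (e n) y) : x = y := by
  apply lp.ext
  funext n
  have := h n
  rwa [inner_e, inner_e] at this

/-- an orthogonal projection p on ℓ²(ℕ) commuting with s*b and with bs
commutes with every coordinate projection pₙ = |eₙ⟩⟨eₙ|, i.e. p is diagonal. -/
theorem commuting_projection_is_diagonal (β : ℕ → ℝ) (hβ0 : β 0 = 0)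
    (hβ : ∀ n, 1 ≤ n → β n ≠ 0)
    (s b : H →L[ℂ] H)
    (hs : ∀ n, s (e n) = e (n + 1))
    (hb : ∀ n, b (e n) = (β n : ℂ) • e n)
    (p : H →L[ℂ] H) (hsa : IsSelfAdjoint p) (hidem : p ∘L p = p)
    (hc1 : p ∘L (adjoint s ∘L b) = (adjoint s ∘L b) ∘L p)
    (hc2 : p ∘L (b ∘L s) = (b ∘L s) ∘L p)
    (q : ℕ → (H →L[ℂ] H))
    (hq : ∀ k n, q k (e n) = if k = n then e n else 0) :
    ∀ k, p ∘L q k = q k ∘L p := by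
  -- adjoint of s on basis vectors
  have hsadj0 : adjoint s (e 0) = 0 := by
    apply H_ext
    intro n
    rw [adjoint_inner_right, hs, inner_e, e_apply]
    simp
  have hsadj : ∀ m, adjoint s (e (m + 1)) = e m := by
    intro m
    apply H_ext
    intro n
    rw [adjoint_inner_right, hs, inner_e, inner_e, e_apply, e_apply]
    simp
  -- adjoint of b on basis vectors
  have hbadj : ∀ m, adjoint b (e m) = (β m : ℂ) • e m := by
    intro m
    apply H_ext
    intro n
    rw [adjoint_inner_right, hb, inner_smul_right, inner_e, inner_smul_left, inner_e, e_apply]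
    by_cases h : m = n
    · subst h; simp
    · simp [h]
  set T : H →L[ℂ] H := b ∘L s with hT
  set W : H →L[ℂ] H := adjoint s ∘L b with hW
  have hTe : ∀ n, T (e n) = (β (n + 1) : ℂ) • e (n + 1) := by
    intro n
    simp [hT, ContinuousLinearMap.comp_apply, hs, hb]
  have hWe0 : W (e 0) = 0 := by
    simp [hW, ContinuousLinearMap.comp_apply, hb, hβ0]
  -- B = T ∘ W commutes with p, and its adjoint acts diagonally on basis
  have hBadj : ∀ m, adjoint (T ∘L W) (e m) = ((β m : ℂ) ^ 2) • e m := by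
    intro m
    rw [adjoint_comp, hW, hT, adjoint_comp, adjoint_comp, adjoint_adjoint]
    match m with
    | 0 =>
      simp [ContinuousLinearMap.comp_apply, hbadj, hβ0]
    | Nat.succ m =>
      simp only [ContinuousLinearMap.comp_apply, hbadj, map_smul, hsadj, hs]
      rw [smul_smul, sq]
  -- p e 0 is a multiple of e 0
  have hp0 : ∀ m, 1 ≤ m → @inner ℂ _ _ (e m) (p (e 0)) = 0 := by
    intro m hm
    have hc1' : ∀ x, p (W x) = W (p x) := fun x => by
      have := congrArg (fun A => A x) hc1
      simpa [ContinuousLinearMap.comp_apply] using this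
    have hc2' : ∀ x, p (T x) = T (p x) := fun x => by
      have := congrArg (fun A => A x) hc2
      simpa [ContinuousLinearMap.comp_apply] using this
    have hB0 : (T ∘L W) (p (e 0)) = 0 := by
      simp only [ContinuousLinearMap.comp_apply]
      rw [← hc1', ← hc2', hWe0, map_zero, map_zero]
    have key := adjoint_inner_left (𝕜 := ℂ) (T ∘L W) (p (e 0)) (e m)
    rw [hBadj, hB0, inner_smul_left, inner_e, inner_zero_right] at key
    have hβm : ((starRingEnd ℂ) ((β m : ℂ) ^ 2)) ≠ 0 := by
      rw [map_pow, Complex.conj_ofReal]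
      exact pow_ne_zero _ (by exact_mod_cast hβ m hm)
    have hz := (mul_eq_zero.mp key).resolve_left hβm
    rw [inner_e]
    exact hz
  set c : ℂ := @inner ℂ _ _ (e 0) (p (e 0)) with hc
  have hpc : ∀ n, p (e n) = c • e n := by
    intro n
    induction n with
    | zero =>
      apply H_ext
      intro m
      rw [inner_smul_right, inner_e, inner_e, e_apply]
      match m with
      | 0 =>
        have : c = ((p (e 0)) : ∀ _ : ℕ, ℂ) 0 := by rw [hc, inner_e]
        simp [this]
      | Nat.succ m =>
        have := hp0 (m + 1) (by omega)
        rw [inner_e] at this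
        simp [this]
    | succ n ih =>
      have hTpe : p (T (e n)) = T (p (e n)) := by
        have := congrArg (fun A => A (e n)) hc2
        simpa [ContinuousLinearMap.comp_apply] using this
      have hβn : (β (n + 1) : ℂ) ≠ 0 := by
        simp only [ne_eq, Complex.ofReal_eq_zero]
        exact hβ (n + 1) (by omega)
      have key : (β (n + 1) : ℂ) • p (e (n + 1)) = (β (n + 1) : ℂ) • (c • e (n + 1)) := by
        calc (β (n + 1) : ℂ) • p (e (n + 1)) = p ((β (n + 1) : ℂ) • e (n + 1)) := (map_smul p _ _).symm
        _ = p (T (e n)) := by rw [hTe]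
        _ = T (p (e n)) := hTpe
        _ = T (c • e n) := by rw [ih]
        _ = c • T (e n) := map_smul T _ _
        _ = c • ((β (n + 1) : ℂ) • e (n + 1)) := by rw [hTe]
        _ = (β (n + 1) : ℂ) • (c • e (n + 1)) := smul_comm _ _ _
      exact smul_right_injective H hβn key
  intro k
  apply ContinuousLinearMap.ext_on dense_span_e
  rintro _ ⟨n, rfl⟩
  simp only [ContinuousLinearMap.comp_apply, hq]
  by_cases h : k = n
  · rw [if_pos h, hpc, map_smul, hq, if_pos h]
  · rw [if_neg h, map_zero, hpc, map_smul, hq, if_neg h, smul_zero]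
end
end

section
/- For ψ = ψ₋ (the state with λ = 0), the transition operator T_{ψ₋}(x) = bs x s*b + a x a is weakly mixing for any admissible model parameters: if x ∈ B(ℓ²(ℕ)) and T_{ψ₋}(x) = μ x with |μ| = 1, then μ = 1 and x is a scalar multiple of the identity. -/
noncomputable section
open ContinuousLinearMap

local notation "⟪" a ", " b "⟫" => @inner ℂ _ _ a b

lemma inner_e_apply (m : ℕ) (v : H) : ⟪e m, v⟫ = v m := by
  rw [e, lp.inner_single_left]
  simp [RCLike.inner_apply]

lemma inner_e_e (k m : ℕ) : ⟪e k, e m⟫ = if k = m then 1 else 0 := by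
  rw [inner_e_apply, e, lp.single_apply]
  by_cases h : k = m <;> simp [h]

lemma ext_e {v w : H} (h : ∀ m, ⟪e m, v⟫ = ⟪e m, w⟫) : v = w := by
  apply lp.ext
  funext m
  have := h m
  rwa [inner_e_apply, inner_e_apply] at this

lemma adj_diag (c : ℕ → ℝ) (t : H →L[ℂ] H) (ht : ∀ n, t (e n) = (c n : ℂ) • e n) (m : ℕ) :
    adjoint t (e m) = (c m : ℂ) • e m := by
  apply ext_e
  intro k
  rw [adjoint_inner_right, ht, inner_smul_left, inner_smul_right, Complex.conj_ofReal,
    inner_e_e]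
  by_cases h : k = m
  · subst h; rfl
  · simp [h]

lemma adj_shift_zero (s : H →L[ℂ] H) (hs : ∀ n, s (e n) = e (n + 1)) :
    adjoint s (e 0) = 0 := by
  apply ext_e
  intro k
  rw [adjoint_inner_right, hs, inner_e_e]
  simp

lemma adj_shift_succ (s : H →L[ℂ] H) (hs : ∀ n, s (e n) = e (n + 1)) (n : ℕ) :
    adjoint s (e (n + 1)) = e n := by
  apply ext_e
  intro k
  rw [adjoint_inner_right, hs, inner_e_e, inner_e_e]
  simp

lemma eq_smul_one (x : H →L[ℂ] H) (c : ℂ) (h : ∀ n, x (e n) = c • e n) : x = c • 1 := by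
  ext v
  have h1 : HasSum (fun i => lp.single 2 i (v i)) v := lp.hasSum_single ENNReal.ofNat_ne_top v
  have h1' : HasSum (fun i : ℕ => v i • e i) v := by
    have : (fun i : ℕ => v i • e i) = fun i => lp.single 2 i (v i) := by
      funext i
      rw [e, ← lp.single_smul, smul_eq_mul, mul_one]
    rw [this]; exact h1
  have h2 : HasSum (fun i : ℕ => x (v i • e i)) (x v) := h1'.mapL x
  have h2' : HasSum (fun i : ℕ => c • (v i • e i)) (x v) := by
    have : (fun i : ℕ => x (v i • e i)) = fun i : ℕ => c • (v i • e i) := by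
      funext i
      rw [map_smul, h, smul_comm]
    rwa [this] at h2
  have h3 : HasSum (fun i : ℕ => c • (v i • e i)) (c • v) := h1'.const_smul c
  rw [h2'.unique h3]
  simp

/-- the transition operator T_{ψ₋}(x) = bs x s*b + a x a is weakly mixing:
if T_{ψ₋}(x) = μ x with |μ| = 1 then μ = 1 and x is a scalar multiple of the identity. -/
theorem psi_minus_weakly_mixing (α β : ℕ → ℝ) (hα0 : α 0 = 1) (hβ0 : β 0 = 0)
    (hαβ : ∀ n, α n ^ 2 + β n ^ 2 = 1) (hβ : ∀ n, 1 ≤ n → β n ≠ 0)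
    (s a b : H →L[ℂ] H)
    (hs : ∀ n, s (e n) = e (n + 1))
    (ha : ∀ n, a (e n) = (α n : ℂ) • e n)
    (hb : ∀ n, b (e n) = (β n : ℂ) • e n)
    (μ : ℂ) (hμ : ‖μ‖ = 1) (x : H →L[ℂ] H) (hx0 : x ≠ 0)
    (hx : (b ∘L s) ∘L x ∘L (adjoint s ∘L b) + a ∘L x ∘L a = μ • x) :
    μ = 1 ∧ ∃ c : ℂ, x = c • 1 := by
  -- moving operators to the left of the inner product
  have hbL : ∀ (m : ℕ) (w : H), ⟪e m, b w⟫ = (β m : ℂ) * ⟪e m, w⟫ := by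
    intro m w
    rw [← adjoint_inner_left, adj_diag β b hb, inner_smul_left, Complex.conj_ofReal]
  have haL : ∀ (m : ℕ) (w : H), ⟪e m, a w⟫ = (α m : ℂ) * ⟪e m, w⟫ := by
    intro m w
    rw [← adjoint_inner_left, adj_diag α a ha, inner_smul_left, Complex.conj_ofReal]
  have hsL : ∀ (m : ℕ) (w : H), ⟪e m, s w⟫ = ⟪adjoint s (e m), w⟫ := by
    intro m w
    rw [← adjoint_inner_left]
  -- the master coefficient equation
  have hE : ∀ m n : ℕ, (μ - (α m : ℂ) * α n) * ⟪e m, x (e n)⟫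
      = (β m : ℂ) * β n * ⟪adjoint s (e m), x (adjoint s (e n))⟫ := by
    intro m n
    have h := congrArg (fun T : H →L[ℂ] H => ⟪e m, T (e n)⟫) hx
    simp only [add_apply, comp_apply, smul_apply, inner_add_right, inner_smul_right] at h
    rw [hb n, map_smul, map_smul, map_smul, map_smul, inner_smul_right, hbL, hsL] at h
    rw [ha n, map_smul, map_smul, inner_smul_right, haL] at h
    linear_combination -h
  -- norm facts
  have hnorm1 : ∀ k, ‖(α k : ℂ)‖ ≤ 1 := by
    intro k
    rw [Complex.norm_real, Real.norm_eq_abs]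
    nlinarith [hαβ k, sq_nonneg (β k), sq_abs (α k), abs_nonneg (α k)]
  have hnorm2 : ∀ k, 1 ≤ k → ‖(α k : ℂ)‖ < 1 := by
    intro k hk
    rw [Complex.norm_real, Real.norm_eq_abs]
    have hb2 : β k ^ 2 ≠ 0 := pow_ne_zero 2 (hβ k hk)
    have hb3 : 0 < β k ^ 2 := lt_of_le_of_ne (sq_nonneg _) (Ne.symm hb2)
    nlinarith [hαβ k, sq_abs (α k), abs_nonneg (α k)]
  have hμne : ∀ m n : ℕ, 1 ≤ m + n → μ - (α m : ℂ) * α n ≠ 0 := by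
    intro m n hmn heq
    have heq' : μ = (α m : ℂ) * α n := sub_eq_zero.mp heq
    have hlt : ‖μ‖ < 1 := by
      rw [heq', norm_mul]
      by_cases hm1 : 1 ≤ m
      · nlinarith [hnorm2 m hm1, hnorm1 n, norm_nonneg ((α n : ℂ)), norm_nonneg ((α m : ℂ))]
      · have hn1 : 1 ≤ n := by omega
        nlinarith [hnorm2 n hn1, hnorm1 m, norm_nonneg ((α n : ℂ)), norm_nonneg ((α m : ℂ))]
    rw [hμ] at hlt
    exact lt_irrefl 1 hlt
  -- first row and column vanish (except (0,0))
  have hrow : ∀ n, 1 ≤ n → ⟪e 0, x (e n)⟫ = 0 := by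
    intro n hn
    have h := hE 0 n
    rw [hβ0] at h
    simp only [Complex.ofReal_zero, zero_mul] at h
    rcases mul_eq_zero.mp h with h' | h'
    · exact absurd h' (hμne 0 n (by omega))
    · exact h'
  have hcol : ∀ m, 1 ≤ m → ⟪e m, x (e 0)⟫ = 0 := by
    intro m hm
    have h := hE m 0
    rw [hβ0] at h
    simp only [Complex.ofReal_zero, mul_zero, zero_mul] at h
    rcases mul_eq_zero.mp h with h' | h'
    · exact absurd h' (hμne m 0 (by omega))
    · exact h'
  -- off-diagonal entries vanish
  have hoff : ∀ n m : ℕ, m ≠ n → ⟪e m, x (e n)⟫ = 0 := by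
    intro n
    induction n with
    | zero => intro m hm; exact hcol m (by omega)
    | succ n ih =>
      intro m hm
      match m with
      | 0 => exact hrow (n + 1) (by omega)
      | Nat.succ k =>
        have h := hE (k + 1) (n + 1)
        rw [adj_shift_succ s hs, adj_shift_succ s hs] at h
        rw [ih k (by omega), mul_zero] at h
        rcases mul_eq_zero.mp h with h' | h'
        · exact absurd h' (hμne (k + 1) (n + 1) (by omega))
        · exact h'
  -- diagonal recursion
  have hdiagrec : ∀ k : ℕ, (μ - (α (k + 1) : ℂ) * α (k + 1)) * ⟪e (k + 1), x (e (k + 1))⟫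
      = (β (k + 1) : ℂ) * β (k + 1) * ⟪e k, x (e k)⟫ := by
    intro k
    have h := hE (k + 1) (k + 1)
    rwa [adj_shift_succ s hs] at h
  have h00 : (μ - 1) * ⟪e 0, x (e 0)⟫ = 0 := by
    have h := hE 0 0
    rw [hβ0, hα0] at h
    push_cast at h
    linear_combination h
  -- the (0,0) entry is nonzero
  have hd0 : ⟪e 0, x (e 0)⟫ ≠ 0 := by
    intro h0
    have hdz : ∀ k, ⟪e k, x (e k)⟫ = 0 := by
      intro k
      induction k with
      | zero => exact h0
      | succ k ih =>
        have h := hdiagrec k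
        rw [ih, mul_zero] at h
        rcases mul_eq_zero.mp h with h' | h'
        · exact absurd h' (hμne (k + 1) (k + 1) (by omega))
        · exact h'
    have hzero : ∀ n, x (e n) = (0 : ℂ) • e n := by
      intro n
      apply ext_e
      intro m
      rw [zero_smul, inner_zero_right]
      by_cases h : m = n
      · subst h; exact hdz m
      · exact hoff n m h
    exact hx0 (by rw [eq_smul_one x 0 hzero, zero_smul])
  have hμ1 : μ = 1 := by
    rcases mul_eq_zero.mp h00 with h' | h'
    · exact sub_eq_zero.mp h'
    · exact absurd h' hd0
  -- diagonal is constant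
  have hconst : ∀ k, ⟪e k, x (e k)⟫ = ⟪e 0, x (e 0)⟫ := by
    intro k
    induction k with
    | zero => rfl
    | succ k ih =>
      have h := hdiagrec k
      rw [hμ1] at h
      have hcast : (1 : ℂ) - (α (k + 1) : ℂ) * α (k + 1) = (β (k + 1) : ℂ) * β (k + 1) := by
        have hr := congrArg (Complex.ofReal) (hαβ (k + 1))
        push_cast at hr
        linear_combination -hr
      rw [hcast] at h
      have hb2 : (β (k + 1) : ℂ) * β (k + 1) ≠ 0 := by
        have : (β (k + 1) : ℂ) ≠ 0 := Complex.ofReal_ne_zero.mpr (hβ (k + 1) (by omega))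
        exact mul_ne_zero this this
      rw [← ih]
      exact mul_left_cancel₀ hb2 h
  refine ⟨hμ1, ⟪e 0, x (e 0)⟫, eq_smul_one x _ ?_⟩
  intro n
  apply ext_e
  intro m
  rw [inner_smul_right, inner_e_e]
  by_cases h : m = n
  · subst h
    rw [if_pos rfl, mul_one]
    exact hconst m
  · rw [if_neg h, mul_zero]
    exact hoff n m h
end
end

section
/- In the setting of homogeneous rates αₙ = α, βₙ = β ≠ 0 (n ≥ 1) and pure state ψ with 0 < λ < 1, |ζ| = 1: if λ ≥ (1−α)/2 then T_ψ admits no pure invariant normal state, i.e., there is no unit vector ξ ∈ ℓ²(ℕ) such that ⟨T_ψ(x) ξ, ξ⟩ = ⟨x ξ, ξ⟩ for all bounded x. -/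
noncomputable section
open ContinuousLinearMap

lemma coord (v : H) (n : ℕ) : (inner ℂ (e n) v : ℂ) = v n := by
  simp [e, lp.inner_single_left, RCLike.inner_apply]

lemma hasSum_coord (T : H →L[ℂ] H) (v : H) (n : ℕ) :
    HasSum (fun i => v i * (inner ℂ (e n) (T (e i)) : ℂ)) ((T v) n) := by
  have h1 : HasSum (fun i : ℕ => lp.single 2 i (v i)) v := lp.hasSum_single (by norm_num) v
  have h2 := h1.mapL ((innerSL ℂ (e n)).comp T)
  rw [show ((innerSL ℂ (e n)).comp T) v = inner ℂ (e n) (T v) from rfl, coord] at h2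
  convert h2 using 2 with i
  · rfl
  have hst : lp.single 2 i (v i) = v i • e i := by
    rw [e, ← lp.single_smul]; norm_num
  simp [hst, inner_smul_right]

lemma inner_e_s16 (n m : ℕ) : (inner ℂ (e n) (e m) : ℂ) = if n = m then 1 else 0 := by
  rw [coord, e]
  rcases eq_or_ne n m with h | h
  · subst h; rw [lp.single_apply_self, if_pos rfl]
  · rw [lp.single_apply_ne 2 m 1 h, if_neg h]

lemma sc0 (s : H →L[ℂ] H) (hs : ∀ n, s (e n) = e (n + 1)) (v : H) : (s v) 0 = 0 := by
  refine (hasSum_coord s v 0).unique ?_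
  convert hasSum_zero with i
  rw [hs, inner_e_s16]
  simp

lemma scS (s : H →L[ℂ] H) (hs : ∀ n, s (e n) = e (n + 1)) (v : H) (n : ℕ) :
    (s v) (n + 1) = v n := by
  refine (hasSum_coord s v (n+1)).unique ?_
  have : (fun i => v i * (inner ℂ (e (n+1)) (s (e i)) : ℂ)) = fun i => if i = n then v n else 0 := by
    ext i
    rw [hs, inner_e_s16]
    by_cases h : i = n
    · subst h; simp
    · rw [if_neg (show ¬(n + 1 = i + 1) by omega), if_neg h, mul_zero]
  rw [this]
  exact hasSum_ite_eq n (v n)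

lemma ac0 (αc : ℝ) (a : H →L[ℂ] H) (ha0 : a (e 0) = e 0)
    (ha : ∀ n, 1 ≤ n → a (e n) = (αc : ℂ) • e n) (v : H) : (a v) 0 = v 0 := by
  refine (hasSum_coord a v 0).unique ?_
  have : (fun i => v i * (inner ℂ (e 0) (a (e i)) : ℂ)) = fun i => if i = 0 then v 0 else 0 := by
    ext i
    cases i with
    | zero => rw [ha0, inner_e_s16]; simp
    | succ m =>
      rw [ha (m+1) (by omega), inner_smul_right, inner_e_s16,
        if_neg (show ¬(0 = m + 1) by omega), if_neg (show ¬(m + 1 = 0) by omega)]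
      ring
  rw [this]
  exact hasSum_ite_eq 0 (v 0)

lemma acS (αc : ℝ) (a : H →L[ℂ] H) (ha0 : a (e 0) = e 0)
    (ha : ∀ n, 1 ≤ n → a (e n) = (αc : ℂ) • e n) (v : H) (n : ℕ) :
    (a v) (n + 1) = (αc : ℂ) * v (n + 1) := by
  refine (hasSum_coord a v (n+1)).unique ?_
  have : (fun i => v i * (inner ℂ (e (n+1)) (a (e i)) : ℂ))
      = fun i => if i = n + 1 then (αc : ℂ) * v (n+1) else 0 := by
    ext i
    cases i with
    | zero => rw [ha0, inner_e_s16, if_neg (show ¬(n + 1 = 0) by omega),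
        if_neg (show ¬(0 = n + 1) by omega), mul_zero]
    | succ m =>
      rw [ha (m+1) (by omega), inner_smul_right, inner_e_s16]
      by_cases h : m = n
      · subst h; simp [mul_comm]
      · rw [if_neg (show ¬(n + 1 = m + 1) by omega), if_neg (show ¬(m + 1 = n + 1) by omega)]
        ring
  rw [this]
  exact hasSum_ite_eq (n+1) _

lemma adjc (s : H →L[ℂ] H) (hs : ∀ n, s (e n) = e (n + 1)) (v : H) (n : ℕ) :
    (adjoint s v) n = v (n + 1) := by
  rw [← coord, adjoint_inner_right, hs, coord]

set_option maxHeartbeats 2000000 in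
/-- homogeneous rates αₙ = α, βₙ = β ≠ 0 (n ≥ 1), pure state ψ with
0 < λ < 1, |ζ| = 1.  If λ ≥ (1−α)/2 then T_ψ(x) = λ(t₁* x t₁ + t₂* x t₂) admits no pure
invariant normal state: there is no unit vector ξ with ⟨T_ψ(x)ξ, ξ⟩ = ⟨xξ, ξ⟩ for all x. -/
theorem no_pure_invariant_state (αc βc : ℝ) (hβc : βc ≠ 0)
    (hαβ : αc ^ 2 + βc ^ 2 = 1)
    (l : ℝ) (hl0 : 0 < l) (hl1 : l < 1) (ζ : ℂ) (hζ : ‖ζ‖ = 1)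
    (hll : (1 - αc) / 2 ≤ l)
    (s a : H →L[ℂ] H)
    (hs : ∀ n, s (e n) = e (n + 1))
    (ha0 : a (e 0) = e 0)
    (ha : ∀ n, 1 ≤ n → a (e n) = (αc : ℂ) • e n)
    (t₁ t₂ : H →L[ℂ] H)
    (ht₁ : t₁ = (αc : ℂ) • 1
        + (Complex.I * ζ * ((Real.sqrt ((1 - l) / l) : ℝ) : ℂ) * (βc : ℂ)) • adjoint s)
    (ht₂ : t₂ = (βc : ℂ) • s + (Complex.I * ζ * ((Real.sqrt ((1 - l) / l) : ℝ) : ℂ)) • a) :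
    ¬ ∃ ξ : H, ‖ξ‖ = 1 ∧
      ∀ x : H →L[ℂ] H,
        (inner ℂ ξ (((l : ℂ) • (adjoint t₁ ∘L x ∘L t₁ + adjoint t₂ ∘L x ∘L t₂)) ξ) : ℂ)
          = (inner ℂ ξ (x ξ) : ℂ) := by
  rintro ⟨ξ, hnorm, hinv⟩
  set γ : ℂ := Complex.I * ζ * ((Real.sqrt ((1 - l) / l) : ℝ) : ℂ) with hγdef
  -- basic positivity facts
  have hβ2 : 0 < βc ^ 2 := by positivity
  have h1α : 0 < 1 - αc := by nlinarith [sq_nonneg (αc + 1)]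
  have h2α : 0 < 1 + αc := by nlinarith [sq_nonneg (αc - 1)]
  have hfrac : 0 < (1 - l) / l := div_pos (by linarith) hl0
  have hγn : ‖γ‖ = Real.sqrt ((1 - l) / l) := by
    rw [hγdef, norm_mul, norm_mul, Complex.norm_I, hζ, Complex.norm_real,
      Real.norm_eq_abs, abs_of_nonneg (Real.sqrt_nonneg _)]
    ring
  have hγpos : 0 < ‖γ‖ := by rw [hγn]; exact Real.sqrt_pos.mpr hfrac
  have hγ0 : γ ≠ 0 := norm_pos_iff.mp hγpos
  have hγβ : γ * (βc : ℂ) ≠ 0 := mul_ne_zero hγ0 (by exact_mod_cast hβc)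
  have hξξ : (inner ℂ ξ ξ : ℂ) = 1 := by
    rw [inner_self_eq_norm_sq_to_K, hnorm]; norm_num
  -- invariance in usable form
  have hinv' : ∀ x : H →L[ℂ] H,
      (l : ℂ) * ((inner ℂ (t₁ ξ) (x (t₁ ξ)) : ℂ) + (inner ℂ (t₂ ξ) (x (t₂ ξ)) : ℂ))
        = (inner ℂ ξ (x ξ) : ℂ) := by
    intro x
    have h := hinv x
    simp only [coe_smul', Pi.smul_apply, add_apply, comp_apply, inner_smul_right,
      inner_add_right, adjoint_inner_right, smul_eq_mul] at h
    exact h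
  set c₁ : ℂ := (inner ℂ ξ (t₁ ξ) : ℂ) with hc₁
  set c₂ : ℂ := (inner ℂ ξ (t₂ ξ) : ℂ) with hc₂
  set w₁ : H := t₁ ξ - c₁ • ξ with hw₁def
  set w₂ : H := t₂ ξ - c₂ • ξ with hw₂def
  have hw₁o : (inner ℂ ξ w₁ : ℂ) = 0 := by
    rw [hw₁def, inner_sub_right, inner_smul_right, hξξ, mul_one, ← hc₁, sub_self]
  have hw₂o : (inner ℂ ξ w₂ : ℂ) = 0 := by
    rw [hw₂def, inner_sub_right, inner_smul_right, hξξ, mul_one, ← hc₂, sub_self]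
  have ht1d : t₁ ξ = c₁ • ξ + w₁ := by rw [hw₁def]; abel
  have ht2d : t₂ ξ = c₂ • ξ + w₂ := by rw [hw₂def]; abel
  have hexp : ∀ (c : ℂ) (w : H), (inner ℂ ξ w : ℂ) = 0 →
      (inner ℂ (c • ξ + w) (c • ξ + w) : ℂ) = (starRingEnd ℂ) c * c + (inner ℂ w w : ℂ) := by
    intro c w hw
    have hw' : (inner ℂ w ξ : ℂ) = 0 := by
      rw [← inner_conj_symm, hw, map_zero]
    rw [inner_add_left, inner_add_right, inner_add_right, inner_smul_left, inner_smul_right,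
      inner_smul_left, inner_smul_right, hξξ, hw, hw']
    ring
  -- x = 1
  have E1 : (l : ℂ) * (((starRingEnd ℂ) c₁ * c₁ + (inner ℂ w₁ w₁ : ℂ))
      + ((starRingEnd ℂ) c₂ * c₂ + (inner ℂ w₂ w₂ : ℂ))) = 1 := by
    have h := hinv' 1
    simp only [one_apply_eq_self] at h
    rw [ht1d, ht2d, hexp c₁ w₁ hw₁o, hexp c₂ w₂ hw₂o] at h
    rw [h, hξξ]
  -- x = rank one projection onto ξ
  have E2 : (l : ℂ) * ((starRingEnd ℂ) c₁ * c₁ + (starRingEnd ℂ) c₂ * c₂) = 1 := by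
    have h := hinv' ((innerSL ℂ ξ).smulRight ξ)
    simp only [smulRight_apply, innerSL_apply_apply, inner_smul_right] at h
    rw [hξξ, mul_one, ← hc₁, ← hc₂] at h
    have k1 : (inner ℂ (t₁ ξ) ξ : ℂ) = (starRingEnd ℂ) c₁ := by
      rw [← inner_conj_symm]
    have k2 : (inner ℂ (t₂ ξ) ξ : ℂ) = (starRingEnd ℂ) c₂ := by
      rw [← inner_conj_symm]
    rw [k1, k2] at h
    calc (l : ℂ) * ((starRingEnd ℂ) c₁ * c₁ + (starRingEnd ℂ) c₂ * c₂)
        = (l : ℂ) * (c₁ * (starRingEnd ℂ) c₁ + c₂ * (starRingEnd ℂ) c₂) := by ring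
      _ = 1 := h
  -- conclude w₁ = w₂ = 0
  have hwsum : (inner ℂ w₁ w₁ : ℂ) + (inner ℂ w₂ w₂ : ℂ) = 0 := by
    have hl0' : (l : ℂ) ≠ 0 := by exact_mod_cast hl0.ne'
    have h3 : (l : ℂ) * ((inner ℂ w₁ w₁ : ℂ) + (inner ℂ w₂ w₂ : ℂ)) = 0 := by
      linear_combination E1 - E2
    rcases mul_eq_zero.mp h3 with h | h
    · exact absurd h hl0'
    · exact h
  have n1 : (inner ℂ w₁ w₁ : ℂ) = ((‖w₁‖ ^ 2 : ℝ) : ℂ) := by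
    rw [inner_self_eq_norm_sq_to_K]; norm_num
  have n2 : (inner ℂ w₂ w₂ : ℂ) = ((‖w₂‖ ^ 2 : ℝ) : ℂ) := by
    rw [inner_self_eq_norm_sq_to_K]; norm_num
  rw [n1, n2, ← Complex.ofReal_add] at hwsum
  have hws : (‖w₁‖ ^ 2 + ‖w₂‖ ^ 2 : ℝ) = 0 := by exact_mod_cast hwsum
  have hw1z : w₁ = 0 := norm_eq_zero.mp (by nlinarith [norm_nonneg w₁, norm_nonneg w₂])
  have hw2z : w₂ = 0 := norm_eq_zero.mp (by nlinarith [norm_nonneg w₁, norm_nonneg w₂])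
  have ht1e : t₁ ξ = c₁ • ξ := by rw [ht1d, hw1z, add_zero]
  have ht2e : t₂ ξ = c₂ • ξ := by rw [ht2d, hw2z, add_zero]
  -- coordinate recursions
  have rec1 : ∀ n, (αc : ℂ) * ξ n + (γ * (βc : ℂ)) * ξ (n + 1) = c₁ * ξ n := by
    intro n
    have h0 : ((((αc : ℂ) • 1 + (γ * (βc : ℂ)) • adjoint s) : H →L[ℂ] H) ξ) n
        = (c₁ • ξ) n := by rw [← ht₁, ht1e]
    simp only [add_apply, coe_smul', Pi.smul_apply, one_apply, lp.coeFn_add, lp.coeFn_smul,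
      Pi.add_apply, smul_eq_mul] at h0
    rw [adjc s hs ξ n] at h0
    exact h0
  have rec2 : ∀ n, (βc : ℂ) * (s ξ) n + γ * (a ξ) n = c₂ * ξ n := by
    intro n
    have h0 : ((((βc : ℂ) • s + γ • a) : H →L[ℂ] H) ξ) n = (c₂ • ξ) n := by
      rw [← ht₂, ht2e]
    simp only [add_apply, coe_smul', Pi.smul_apply, lp.coeFn_add, lp.coeFn_smul,
      Pi.add_apply, smul_eq_mul] at h0
    exact h0
  have hq0 : ξ 0 ≠ 0 := by
    intro h0
    have hz : ∀ n, ξ n = 0 := by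
      intro n
      induction n with
      | zero => exact h0
      | succ m ih =>
        have h := rec1 m
        rw [ih] at h
        have h2 : (γ * (βc : ℂ)) * ξ (m + 1) = 0 := by linear_combination h
        exact (mul_eq_zero.mp h2).resolve_left hγβ
    have hzz : ξ = 0 := lp.ext (funext fun n => by rw [hz n]; rfl)
    rw [hzz, norm_zero] at hnorm
    exact one_ne_zero hnorm.symm
  have hc2γ : c₂ = γ := by
    have h := rec2 0
    rw [sc0 s hs ξ, ac0 αc a ha0 ha ξ] at h
    have h2 : (γ - c₂) * ξ 0 = 0 := by linear_combination h
    rcases mul_eq_zero.mp h2 with h' | h'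
    · exact (sub_eq_zero.mp h').symm
    · exact absurd h' hq0
  have hrel : ∀ m, (βc : ℂ) * ξ m = γ * (1 - (αc : ℂ)) * ξ (m + 1) := by
    intro m
    have h := rec2 (m + 1)
    rw [scS s hs ξ m, acS αc a ha0 ha ξ m, hc2γ] at h
    linear_combination h
  have hone : ‖(1 - (αc : ℂ))‖ = 1 - αc := by
    rw [show (1 - (αc : ℂ)) = ((1 - αc : ℝ) : ℂ) by push_cast; ring, Complex.norm_real,
      Real.norm_eq_abs, abs_of_pos h1α]
  have hnrel : ∀ m, |βc| * ‖ξ m‖ = ‖γ‖ * (1 - αc) * ‖ξ (m + 1)‖ := by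
    intro m
    have h := congrArg norm (hrel m)
    rw [norm_mul, norm_mul, norm_mul, hone, Complex.norm_real, Real.norm_eq_abs] at h
    exact h
  have hkey : ‖γ‖ * (1 - αc) ≤ |βc| := by
    have hg2 : ‖γ‖ ^ 2 = (1 - l) / l := by rw [hγn, Real.sq_sqrt hfrac.le]
    have hsq : (‖γ‖ * (1 - αc)) ^ 2 ≤ |βc| ^ 2 := by
      rw [mul_pow, hg2, sq_abs, div_mul_eq_mul_div, div_le_iff₀ hl0]
      nlinarith [h1α, h2α]
    nlinarith [hsq, abs_nonneg βc, mul_nonneg hγpos.le h1α.le]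
  have hmono : ∀ m, ‖ξ m‖ ≤ ‖ξ (m + 1)‖ := by
    intro m
    have hb : 0 < |βc| := abs_pos.mpr hβc
    nlinarith [hnrel m, hkey, hb, norm_nonneg (ξ (m + 1)), norm_nonneg (ξ m)]
  have hlow : ∀ m, ‖ξ 0‖ ≤ ‖ξ m‖ := by
    intro m
    induction m with
    | zero => exact le_refl _
    | succ k ih => exact ih.trans (hmono k)
  have hsum : Summable fun n => ‖ξ n‖ ^ ((2 : ENNReal).toReal) :=
    (memℓp_gen_iff (by norm_num)).mp (lp.memℓp ξ)
  have hzero := hsum.tendsto_atTop_zero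
  have hle : ‖ξ 0‖ ^ ((2 : ENNReal).toReal) ≤ 0 :=
    ge_of_tendsto' hzero fun n =>
      Real.rpow_le_rpow (norm_nonneg _) (hlow n) (by norm_num)
  have hpos : 0 < ‖ξ 0‖ ^ ((2 : ENNReal).toReal) :=
    Real.rpow_pos_of_pos (norm_pos_iff.mpr hq0) _
  linarith
end
end
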